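/- Suppose B is a tensored, cotensored, and finitely well-complete V-category. Then (Epi_V B, StrMono_V B) = (Epi B, StrMono B) is a V-factorization system on B. -/

import Mathlib

open CategoryTheory CategoryTheory.Limits CategoryTheory.MonoidalCategory

universe w v₁ v₂ v₃ v₄ u₁ u₂ u₃ u₄

namespace EnrichedFS

variable (V : Type u₁) [Category.{v₁} V] [MonoidalCategory V] [SymmetricCategory V]
  [MonoidalClosed V]
variable (B : Type u₂) [Category.{v₂} B] [EnrichedOrdinaryCategory V B]

/-- `e` is `V`-orthogonal to `m`: the square of hom-objects
with top `B(A₂,m)`, left `B(e,X₁)`, right `B(e,X₂)`, bottom `B(A₁,m)`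
is a pullback in `V`. -/
def VOrth {A₁ A₂ X₁ X₂ : B} (e : A₁ ⟶ A₂) (m : X₁ ⟶ X₂) : Prop :=
  IsPullback (eHomWhiskerLeft V A₂ m) (eHomWhiskerRight V e X₁)
    (eHomWhiskerRight V e X₂) (eHomWhiskerLeft V A₁ m)

/-- `H^{↓V}`: the class of morphisms to which every member of `H` is `V`-orthogonal. -/
def vRlp (H : MorphismProperty B) : MorphismProperty B :=
  fun _ _ m => ∀ ⦃A₁ A₂ : B⦄ (e : A₁ ⟶ A₂), H e → VOrth V B e m

/-- `M^{↑V}`: the class of morphisms which are `V`-orthogonal to every member of `M`. -/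
def vLlp (M : MorphismProperty B) : MorphismProperty B :=
  fun _ _ e => ∀ ⦃X₁ X₂ : B⦄ (m : X₁ ⟶ X₂), M m → VOrth V B e m

/-- ordinary orthogonality: unique diagonal fillers for every commutative square. -/
def OrdOrth {A₁ A₂ X₁ X₂ : B} (e : A₁ ⟶ A₂) (m : X₁ ⟶ X₂) : Prop :=
  ∀ (u : A₁ ⟶ X₁) (v : A₂ ⟶ X₂), u ≫ m = e ≫ v →
    ∃! d : A₂ ⟶ X₁, e ≫ d = u ∧ d ≫ m = v

/-- `H^{↓}` (ordinary). -/
def ordRlp (H : MorphismProperty B) : MorphismProperty B :=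
  fun _ _ m => ∀ ⦃A₁ A₂ : B⦄ (e : A₁ ⟶ A₂), H e → OrdOrth B e m

/-- `M^{↑}` (ordinary). -/
def ordLlp (M : MorphismProperty B) : MorphismProperty B :=
  fun _ _ e => ∀ ⦃X₁ X₂ : B⦄ (m : X₁ ⟶ X₂), M m → OrdOrth B e m

/-- `(E,M)` is a `V`-prefactorization system: `E^{↓V} = M` and `M^{↑V} = E`. -/
def IsVPrefactorization (E M : MorphismProperty B) : Prop :=
  vRlp V B E = M ∧ vLlp V B M = E

/-- `(E,M)` is an ordinary prefactorization system. -/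
def IsOrdPrefactorization (E M : MorphismProperty B) : Prop :=
  ordRlp B E = M ∧ ordLlp B M = E

/-- every morphism factors as a morphism in `E` followed by a morphism in `M`. -/
def FactorizationsExist (E M : MorphismProperty B) : Prop :=
  ∀ ⦃X Y : B⦄ (f : X ⟶ Y), ∃ (Z : B) (e : X ⟶ Z) (m : Z ⟶ Y), E e ∧ M m ∧ e ≫ m = f

/-- `(E,M)` is a `V`-factorization system. -/
def IsVFactorizationSystem (E M : MorphismProperty B) : Prop :=
  IsVPrefactorization V B E M ∧ FactorizationsExist B E M

/-- `(E,M)` is an ordinary factorization system. -/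
def IsOrdFactorizationSystem (E M : MorphismProperty B) : Prop :=
  IsOrdPrefactorization B E M ∧ FactorizationsExist B E M

/-- intersection of two classes of morphisms. -/
def interProp (M N : MorphismProperty B) : MorphismProperty B := fun _ _ f => M f ∧ N f

/-- `V`-monomorphisms. -/
def vMono : MorphismProperty B := fun _ _ m => ∀ A : B, Mono (eHomWhiskerLeft V A m)

/-- `V`-epimorphisms. -/
def vEpi : MorphismProperty B := fun _ _ e => ∀ A : B, Mono (eHomWhiskerRight V e A)

/-- `V`-strong monomorphisms. -/
def vStrongMono : MorphismProperty B := fun _ _ m =>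
  vMono V B m ∧ ∀ ⦃A₁ A₂ : B⦄ (e : A₁ ⟶ A₂), vEpi V B e → VOrth V B e m

/-- `V`-strong epimorphisms. -/
def vStrongEpi : MorphismProperty B := fun _ _ e =>
  vEpi V B e ∧ ∀ ⦃X₁ X₂ : B⦄ (m : X₁ ⟶ X₂), vMono V B m → VOrth V B e m

/-- ordinary monomorphisms, as a class. -/
def ordMono : MorphismProperty B := fun _ _ m => Mono m

/-- ordinary epimorphisms, as a class. -/
def ordEpi : MorphismProperty B := fun _ _ e => Epi e

/-- ordinary strong monomorphisms. -/
def ordStrongMono : MorphismProperty B := fun _ _ m =>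
  Mono m ∧ ∀ ⦃A₁ A₂ : B⦄ (e : A₁ ⟶ A₂), Epi e → OrdOrth B e m

/-- ordinary strong epimorphisms. -/
def ordStrongEpi : MorphismProperty B := fun _ _ e =>
  Epi e ∧ ∀ ⦃X₁ X₂ : B⦄ (m : X₁ ⟶ X₂), Mono m → OrdOrth B e m

/-- closure under composition with isomorphisms on either side. -/
def ClosedUnderIsoComp (E : MorphismProperty B) : Prop :=
  (∀ ⦃X Y Z : B⦄ (e : X ⟶ Y) (i : Y ⟶ Z), E e → IsIso i → E (e ≫ i)) ∧
  (∀ ⦃X Y Z : B⦄ (i : X ⟶ Y) (e : Y ⟶ Z), IsIso i → E e → E (i ≫ e))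

/-- a commutative square which is a `V`-pullback: it is sent to a pullback square
in `V` by every hom functor `B(A,-)`. -/
def IsVPullbackSq {P X Y Z : B} (p₁ : P ⟶ X) (p₂ : P ⟶ Y) (f : X ⟶ Z) (g : Y ⟶ Z) : Prop :=
  p₁ ≫ f = p₂ ≫ g ∧
    ∀ A : B, IsPullback (eHomWhiskerLeft V A p₁) (eHomWhiskerLeft V A p₂)
      (eHomWhiskerLeft V A f) (eHomWhiskerLeft V A g)

/-- a commutative square which is a `V`-pushout: it is sent to a pullback square
in `V` by every hom functor `B(-,A)`. -/
def IsVPushoutSq {X Y₁ Y₂ Q : B} (f₁ : X ⟶ Y₁) (f₂ : X ⟶ Y₂) (i₁ : Y₁ ⟶ Q) (i₂ : Y₂ ⟶ Q) :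
    Prop :=
  f₁ ≫ i₁ = f₂ ≫ i₂ ∧
    ∀ A : B, IsPullback (eHomWhiskerRight V i₁ A) (eHomWhiskerRight V i₂ A)
      (eHomWhiskerRight V f₁ A) (eHomWhiskerRight V f₂ A)

/-- `B` has `V`-kernel pairs. -/
def HasVKernelPairs : Prop :=
  ∀ ⦃X Y : B⦄ (f : X ⟶ Y), ∃ (P : B) (p₁ p₂ : P ⟶ X), IsVPullbackSq V B p₁ p₂ f f

/-- `B` has `V`-cokernel pairs. -/
def HasVCokernelPairs : Prop :=
  ∀ ⦃X Y : B⦄ (f : X ⟶ Y), ∃ (Q : B) (i₁ i₂ : Y ⟶ Q), IsVPushoutSq V B f f i₁ i₂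

/-- `m : P ⟶ C` is a `V`-fibre-product (`V`-wide-pullback) of the family `f i : X i ⟶ C`,
with projections `π i`. -/
def IsVFibreProduct {ι : Type w} {C : B} {X : ι → B} (f : ∀ i, X i ⟶ C)
    {P : B} (m : P ⟶ C) (π : ∀ i, P ⟶ X i) : Prop :=
  (∀ i, π i ≫ f i = m) ∧
    ∀ (A : B) (Z : V) (z : Z ⟶ (A ⟶[V] C)) (zi : ∀ i, Z ⟶ (A ⟶[V] X i)),
      (∀ i, zi i ≫ eHomWhiskerLeft V A (f i) = z) →
        ∃! t : Z ⟶ (A ⟶[V] P), t ≫ eHomWhiskerLeft V A m = z ∧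
          ∀ i, t ≫ eHomWhiskerLeft V A (π i) = zi i

/-- `m : P ⟶ C` is an ordinary fibre product (wide pullback) of the family `f i : X i ⟶ C`. -/
def OrdIsFibreProduct {ι : Type w} {C : B} {X : ι → B} (f : ∀ i, X i ⟶ C)
    {P : B} (m : P ⟶ C) (π : ∀ i, P ⟶ X i) : Prop :=
  (∀ i, π i ≫ f i = m) ∧
    ∀ ⦃W' : B⦄ (z : W' ⟶ C) (zi : ∀ i, W' ⟶ X i), (∀ i, zi i ≫ f i = z) →
      ∃! t : W' ⟶ P, t ≫ m = z ∧ ∀ i, t ≫ π i = zi i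

/-- a cone is a `V`-limit cone: it is sent to a limit cone in `V` by every `B(A,-)`. -/
def IsVLimitCone {J : Type u₃} [Category.{v₃} J] {D : J ⥤ B} (c : Cone D) : Prop :=
  ∀ (A : B) (Z : V) (z : ∀ j : J, Z ⟶ (A ⟶[V] D.obj j)),
    (∀ ⦃j j' : J⦄ (φ : j ⟶ j'), z j ≫ eHomWhiskerLeft V A (D.map φ) = z j') →
      ∃! t : Z ⟶ (A ⟶[V] c.pt), ∀ j, t ≫ eHomWhiskerLeft V A (c.π.app j) = z j

/-- a cocone is a `V`-colimit cocone: it is sent to a limit cone in `V` by every `B(-,A)`. -/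
def IsVColimitCocone {J : Type u₃} [Category.{v₃} J] {D : J ⥤ B} (c : Cocone D) : Prop :=
  ∀ (A : B) (Z : V) (z : ∀ j : J, Z ⟶ (D.obj j ⟶[V] A)),
    (∀ ⦃j j' : J⦄ (φ : j ⟶ j'), z j' ≫ eHomWhiskerRight V (D.map φ) A = z j) →
      ∃! t : Z ⟶ (c.pt ⟶[V] A), ∀ j, t ≫ eHomWhiskerRight V (c.ι.app j) A = z j

/-- `B` has small `V`-limits. -/
def HasSmallVLimits : Prop :=
  ∀ (J : Type v₂) [SmallCategory J] (D : J ⥤ B), ∃ c : Cone D, IsVLimitCone V B c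

/-- `B` has small `V`-colimits. -/
def HasSmallVColimits : Prop :=
  ∀ (J : Type v₂) [SmallCategory J] (D : J ⥤ B), ∃ c : Cocone D, IsVColimitCocone V B c

/-- `B` has finite `V`-limits. -/
def HasFiniteVLimits : Prop :=
  ∀ (J : Type) [SmallCategory J] [FinCategory J] (D : J ⥤ B),
    ∃ c : Cone D, IsVLimitCone V B c

/-- `B` is well-powered with respect to the class `M`: every object has,
up to isomorphism, only a set of `M`-subobjects. -/
def WellPoweredWrt (M : MorphismProperty B) : Prop :=
  ∀ X : B, ∃ (ι : Type v₂) (Y : ι → B) (f : ∀ i, Y i ⟶ X), (∀ i, M (f i)) ∧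
    ∀ ⦃Z : B⦄ (g : Z ⟶ X), M g → ∃ (i : ι) (h : Z ≅ Y i), h.hom ≫ f i = g

/-- `B` is co-well-powered with respect to the class `E`. -/
def CoWellPoweredWrt (E : MorphismProperty B) : Prop :=
  ∀ X : B, ∃ (ι : Type v₂) (Y : ι → B) (f : ∀ i, X ⟶ Y i), (∀ i, E (f i)) ∧
    ∀ ⦃Z : B⦄ (g : X ⟶ Z), E g → ∃ (i : ι) (h : Y i ≅ Z), f i ≫ h.hom = g

/-- comparison morphism `B(T, X) ⟶ [v, B(A, X)]` in `V` induced by a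
unit `η : v ⟶ B(A, T)`, where `T` is a candidate tensor `v ⊗ A`. -/
def tensorComparison {v : V} {A T : B} (η : v ⟶ (A ⟶[V] T)) (X : B) :
    (T ⟶[V] X) ⟶ (ihom v).obj (A ⟶[V] X) :=
  MonoidalClosed.curry (eComp V A T X) ≫ (MonoidalClosed.pre η).app (A ⟶[V] X)

/-- `η : v ⟶ B(A,T)` exhibits `T` as a tensor `v ⊗ A` in the enriched sense. -/
def IsTensorUnit (v : V) (A T : B) (η : v ⟶ (A ⟶[V] T)) : Prop :=
  ∀ X : B, IsIso (tensorComparison V B η X)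

/-- `B` is tensored over `V`. -/
def Tensored : Prop :=
  ∀ (v : V) (A : B), ∃ (T : B) (η : v ⟶ (A ⟶[V] T)), IsTensorUnit V B v A T η

/-- `E` is closed under tensors: whenever tensors exist, `v ⊗ e` lies in `E` for `e ∈ E`. -/
def ClosedUnderTensors (E : MorphismProperty B) : Prop :=
  ∀ (v : V) ⦃A₁ A₂ : B⦄ (e : A₁ ⟶ A₂) {T₁ T₂ : B}
    (η₁ : v ⟶ (A₁ ⟶[V] T₁)) (η₂ : v ⟶ (A₂ ⟶[V] T₂)),
    IsTensorUnit V B v A₁ T₁ η₁ → IsTensorUnit V B v A₂ T₂ η₂ → E e →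
      ∀ t : T₁ ⟶ T₂, η₁ ≫ eHomWhiskerLeft V A₁ t = η₂ ≫ eHomWhiskerRight V e T₂ → E t

/-- comparison morphism `B(A, C) ⟶ [v, B(A, X)]` in `V` induced by a
counit `ε : v ⟶ B(C, X)`, where `C` is a candidate cotensor `[v, X]`. -/
def cotensorComparison {v : V} {C X : B} (ε : v ⟶ (C ⟶[V] X)) (A : B) :
    (A ⟶[V] C) ⟶ (ihom v).obj (A ⟶[V] X) :=
  MonoidalClosed.curry ((β_ (C ⟶[V] X) (A ⟶[V] C)).hom ≫ eComp V A C X) ≫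
    (MonoidalClosed.pre ε).app (A ⟶[V] X)

/-- `ε : v ⟶ B(C,X)` exhibits `C` as a cotensor `[v, X]` in the enriched sense. -/
def IsCotensorCounit (v : V) (X C : B) (ε : v ⟶ (C ⟶[V] X)) : Prop :=
  ∀ A : B, IsIso (cotensorComparison V B ε A)

/-- `B` is cotensored over `V`. -/
def Cotensored : Prop :=
  ∀ (v : V) (X : B), ∃ (C : B) (ε : v ⟶ (C ⟶[V] X)), IsCotensorCounit V B v X C ε

/-- `M` is closed under cotensors: `[v, m]` lies in `M` for `m ∈ M`. -/
def ClosedUnderCotensors (M : MorphismProperty B) : Prop :=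
  ∀ (v : V) ⦃X₁ X₂ : B⦄ (m : X₁ ⟶ X₂) {C₁ C₂ : B}
    (ε₁ : v ⟶ (C₁ ⟶[V] X₁)) (ε₂ : v ⟶ (C₂ ⟶[V] X₂)),
    IsCotensorCounit V B v X₁ C₁ ε₁ → IsCotensorCounit V B v X₂ C₂ ε₂ → M m →
      ∀ t : C₁ ⟶ C₂, ε₁ ≫ eHomWhiskerLeft V C₁ m = ε₂ ≫ eHomWhiskerRight V t X₂ → M t

/-- a `V`-functor from a `V`-category `J` to an enriched ordinary category `D`. -/
structure VFunctor (J : Type u₃) [EnrichedCategory V J]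
    (D : Type u₄) [Category.{v₄} D] [EnrichedOrdinaryCategory V D] where
  obj : J → D
  emap : ∀ X Y : J, (X ⟶[V] Y) ⟶ (obj X ⟶[V] obj Y)
  emap_id : ∀ X : J, eId V X ≫ emap X X = eId V (obj X)
  emap_comp : ∀ X Y Z : J,
    eComp V X Y Z ≫ emap X Z = (emap X Y ⊗ₘ emap Y Z) ≫ eComp V (obj X) (obj Y) (obj Z)

/-- the underlying action of a `V`-functor on ordinary morphisms. -/
def VFunctor.map' {J : Type u₃} [Category.{v₃} J] [EnrichedOrdinaryCategory V J]
    {D : Type u₄} [Category.{v₄} D] [EnrichedOrdinaryCategory V D]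
    (F : VFunctor V J D) {X Y : J} (f : X ⟶ Y) : F.obj X ⟶ F.obj Y :=
  (eHomEquiv V).symm (eHomEquiv V f ≫ F.emap X Y)

/-- a `V`-adjunction `F ⊣ G`, given by a `V`-natural isomorphism
`D(F A, X) ≅ A(A, G X)` of hom-objects. -/
structure VAdjunction {A : Type u₃} [Category.{v₃} A] [EnrichedOrdinaryCategory V A]
    {D : Type u₄} [Category.{v₄} D] [EnrichedOrdinaryCategory V D]
    (F : VFunctor V A D) (G : VFunctor V D A) where
  iso : ∀ (X : A) (Y : D), (F.obj X ⟶[V] Y) ≅ (X ⟶[V] G.obj Y)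
  nat_right : ∀ (X : A) (Y Y' : D),
    eComp V (F.obj X) Y Y' ≫ (iso X Y').hom =
      ((iso X Y).hom ⊗ₘ G.emap Y Y') ≫ eComp V X (G.obj Y) (G.obj Y')
  nat_left : ∀ (X X' : A) (Y : D),
    (F.emap X X' ▷ (F.obj X' ⟶[V] Y)) ≫ eComp V (F.obj X) (F.obj X') Y ≫ (iso X Y).hom =
      ((X ⟶[V] X') ◁ (iso X' Y).hom) ≫ eComp V X X' (G.obj Y)

/-- a `V`-functor `J → V` (a weight), presented by its uncurried action. -/
structure VWeight (J : Type u₃) [EnrichedCategory V J] where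
  obj : J → V
  act : ∀ j j' : J, obj j ⊗ (j ⟶[V] j') ⟶ obj j'
  act_id : ∀ j : J, (obj j ◁ eId V j) ≫ act j j = (ρ_ (obj j)).hom
  act_comp : ∀ j j' j'' : J,
    (α_ (obj j) (j ⟶[V] j') (j' ⟶[V] j'')).inv ≫ (act j j' ▷ (j' ⟶[V] j'')) ≫ act j' j'' =
      (obj j ◁ eComp V j j' j'') ≫ act j j''

/-- a `V`-natural transformation between `V`-functors. -/
structure VNatTrans {J : Type u₃} [EnrichedCategory V J]
    {D : Type u₄} [Category.{v₄} D] [EnrichedOrdinaryCategory V D]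
    (F G : VFunctor V J D) where
  app : ∀ j : J, F.obj j ⟶ G.obj j
  naturality : ∀ j j' : J,
    F.emap j j' ≫ eHomWhiskerLeft V (F.obj j) (app j') =
      G.emap j j' ≫ eHomWhiskerRight V (app j) (G.obj j')

/-- `cone` exhibits `L` as the `V`-enriched weighted (indexed) limit `[W, F]`. -/
structure IsWeightedLimit {J : Type u₃} [EnrichedCategory V J]
    {D : Type u₄} [Category.{v₄} D] [EnrichedOrdinaryCategory V D]
    (W : VWeight V J) (F : VFunctor V J D) (L : D)
    (cone : ∀ j : J, W.obj j ⟶ (L ⟶[V] F.obj j)) : Prop where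
  natural : ∀ j j' : J,
    W.act j j' ≫ cone j' =
      (cone j ▷ (j ⟶[V] j')) ≫ ((L ⟶[V] F.obj j) ◁ F.emap j j') ≫
        eComp V L (F.obj j) (F.obj j')
  universal : ∀ (A : D) (Z : V) (μ : ∀ j : J, Z ⊗ W.obj j ⟶ (A ⟶[V] F.obj j)),
    (∀ j j' : J,
      (Z ◁ W.act j j') ≫ μ j' =
        (α_ Z (W.obj j) (j ⟶[V] j')).inv ≫ (μ j ▷ (j ⟶[V] j')) ≫
          ((A ⟶[V] F.obj j) ◁ F.emap j j') ≫ eComp V A (F.obj j) (F.obj j')) →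
      ∃! t : Z ⟶ (A ⟶[V] L), ∀ j : J,
        (t ▷ W.obj j) ≫ ((A ⟶[V] L) ◁ cone j) ≫ eComp V A L (F.obj j) = μ j

/-- `B` is `V`-finitely-well-complete: it has finite `V`-limits and `V`-intersections
of arbitrary class-indexed families of `V`-strong monomorphisms. -/
def VFinitelyWellComplete : Prop :=
  HasFiniteVLimits V B ∧
    ∀ {ι : Type (max u₂ v₂)} {C : B} (X : ι → B) (f : ∀ i, X i ⟶ C),
      (∀ i, vStrongMono V B (f i)) →
        ∃ (P : B) (m : P ⟶ C) (π : ∀ i, P ⟶ X i), IsVFibreProduct V B f m π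

/-- `B` is finitely well-complete (ordinary sense): it has finite limits and
intersections of arbitrary class-indexed families of strong monomorphisms. -/
def OrdFinitelyWellComplete : Prop :=
  HasFiniteLimits B ∧
    ∀ {ι : Type (max u₂ v₂)} {C : B} (X : ι → B) (f : ∀ i, X i ⟶ C),
      (∀ i, ordStrongMono B (f i)) →
        ∃ (P : B) (m : P ⟶ C) (π : ∀ i, P ⟶ X i), OrdIsFibreProduct B f m π


/-! ### Auxiliary lemmas -/

section Aux

lemma eHomEquiv_comp_left' {X Y Z : B} (f : X ⟶ Y) (g : Y ⟶ Z) :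
    eHomEquiv V (f ≫ g) = eHomEquiv V f ≫ eHomWhiskerLeft V X g := by
  rw [eHomEquiv_comp, eHomWhiskerLeft, MonoidalCategory.tensorHom_def]
  simp only [Category.assoc]
  rw [unitors_inv_equal, ← rightUnitor_inv_naturality_assoc]

lemma eHomEquiv_comp_right' {X Y Z : B} (f : X ⟶ Y) (g : Y ⟶ Z) :
    eHomEquiv V (f ≫ g) = eHomEquiv V g ≫ eHomWhiskerRight V f Z := by
  rw [eHomEquiv_comp, eHomWhiskerRight, tensorHom_def']
  simp only [Category.assoc]
  rw [← leftUnitor_inv_naturality_assoc]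

lemma tensor_transfer {v : V} {A T : B} (η : v ⟶ (A ⟶[V] T)) {X : B} (g : T ⟶ X) :
    (ρ_ v).inv ≫ MonoidalClosed.uncurry (eHomEquiv V g ≫ tensorComparison V B η X) =
      η ≫ eHomWhiskerLeft V A g := by
  rw [tensorComparison, MonoidalClosed.uncurry_eq]
  rw [MonoidalCategory.whiskerLeft_comp, MonoidalCategory.whiskerLeft_comp, Category.assoc,
    Category.assoc, MonoidalClosed.id_tensor_pre_app_comp_ev]
  rw [whisker_exchange_assoc, whisker_exchange_assoc, ← rightUnitor_inv_naturality_assoc,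
    ← MonoidalClosed.uncurry_eq, MonoidalClosed.uncurry_curry, eHomWhiskerLeft]

lemma cotensor_transfer {v : V} {C X : B} (ε : v ⟶ (C ⟶[V] X)) {A : B} (h : A ⟶ C) :
    (ρ_ v).inv ≫ MonoidalClosed.uncurry (eHomEquiv V h ≫ cotensorComparison V B ε A) =
      ε ≫ eHomWhiskerRight V h X := by
  rw [cotensorComparison, MonoidalClosed.uncurry_eq]
  rw [MonoidalCategory.whiskerLeft_comp, MonoidalCategory.whiskerLeft_comp, Category.assoc,
    Category.assoc, MonoidalClosed.id_tensor_pre_app_comp_ev]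
  rw [whisker_exchange_assoc, whisker_exchange_assoc, ← rightUnitor_inv_naturality_assoc,
    ← MonoidalClosed.uncurry_eq, MonoidalClosed.uncurry_curry]
  rw [eHomWhiskerRight]
  rw [BraidedCategory.braiding_naturality_right_assoc]
  have hb : (β_ (C ⟶[V] X) (𝟙_ V)).hom = (ρ_ _).hom ≫ (λ_ _).inv := by
    rw [← braiding_leftUnitor]; simp
  rw [hb]; simp

lemma tensor_bij {v : V} {A T : B} {η : v ⟶ (A ⟶[V] T)} (hη : IsTensorUnit V B v A T η)
    (X : B) : Function.Bijective (fun g : T ⟶ X => η ≫ eHomWhiskerLeft V A g) := by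
  haveI : IsIso (tensorComparison V B η X) := hη X
  constructor
  · intro g₁ g₂ hg
    apply (eHomEquiv V).injective
    rw [← cancel_mono (tensorComparison V B η X)]
    apply MonoidalClosed.uncurry_injective
    rw [← cancel_epi (ρ_ v).inv]
    rw [tensor_transfer, tensor_transfer]
    exact hg
  · intro z
    refine ⟨(eHomEquiv V).symm
      (MonoidalClosed.curry ((ρ_ v).hom ≫ z) ≫ inv (tensorComparison V B η X)), ?_⟩
    have h1 := tensor_transfer V B η
      ((eHomEquiv V).symm
        (MonoidalClosed.curry ((ρ_ v).hom ≫ z) ≫ inv (tensorComparison V B η X)))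
    rw [Equiv.apply_symm_apply] at h1
    rw [Category.assoc, IsIso.inv_hom_id, Category.comp_id,
      MonoidalClosed.uncurry_curry, Iso.inv_hom_id_assoc] at h1
    exact h1.symm

lemma cotensor_bij {v : V} {C X : B} {ε : v ⟶ (C ⟶[V] X)} (hε : IsCotensorCounit V B v X C ε)
    (A : B) : Function.Bijective (fun h : A ⟶ C => ε ≫ eHomWhiskerRight V h X) := by
  haveI : IsIso (cotensorComparison V B ε A) := hε A
  constructor
  · intro g₁ g₂ hg
    apply (eHomEquiv V).injective
    rw [← cancel_mono (cotensorComparison V B ε A)]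
    apply MonoidalClosed.uncurry_injective
    rw [← cancel_epi (ρ_ v).inv]
    rw [cotensor_transfer, cotensor_transfer]
    exact hg
  · intro z
    refine ⟨(eHomEquiv V).symm
      (MonoidalClosed.curry ((ρ_ v).hom ≫ z) ≫ inv (cotensorComparison V B ε A)), ?_⟩
    have h1 := cotensor_transfer V B ε
      ((eHomEquiv V).symm
        (MonoidalClosed.curry ((ρ_ v).hom ≫ z) ≫ inv (cotensorComparison V B ε A)))
    rw [Equiv.apply_symm_apply] at h1
    rw [Category.assoc, IsIso.inv_hom_id, Category.comp_id,
      MonoidalClosed.uncurry_curry, Iso.inv_hom_id_assoc] at h1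
    exact h1.symm

/-! ### V-epi / V-mono vs ordinary -/

lemma epi_of_vEpi {A₁ A₂ : B} (e : A₁ ⟶ A₂) (h : vEpi V B e) : Epi e := by
  constructor
  intro W a b hab
  apply (eHomEquiv V).injective
  have := h W
  rw [← cancel_mono (eHomWhiskerRight V e W)]
  rw [← eHomEquiv_comp_right', ← eHomEquiv_comp_right', hab]

lemma vEpi_of_epi (hc : Cotensored V B) {A₁ A₂ : B} (e : A₁ ⟶ A₂) (he : Epi e) :
    vEpi V B e := by
  intro A
  constructor
  intro Z t₁ t₂ htt
  obtain ⟨C, ε, hC⟩ := hc Z A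
  obtain ⟨h₁, rfl⟩ := (cotensor_bij V B hC A₂).2 t₁
  obtain ⟨h₂, rfl⟩ := (cotensor_bij V B hC A₂).2 t₂
  have key : ∀ h : A₂ ⟶ C, (ε ≫ eHomWhiskerRight V h A) ≫ eHomWhiskerRight V e A
      = ε ≫ eHomWhiskerRight V (e ≫ h) A := by
    intro h; rw [eHomWhiskerRight_comp, Category.assoc]
  rw [key, key] at htt
  have h3 : e ≫ h₁ = e ≫ h₂ := (cotensor_bij V B hC A₁).1 htt
  rw [cancel_epi e] at h3
  rw [h3]

lemma mono_of_vMono {X₁ X₂ : B} (m : X₁ ⟶ X₂) (h : vMono V B m) : Mono m := by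
  constructor
  intro W a b hab
  apply (eHomEquiv V).injective
  have := h W
  rw [← cancel_mono (eHomWhiskerLeft V W m)]
  rw [← eHomEquiv_comp_left', ← eHomEquiv_comp_left', hab]

lemma vMono_of_mono (ht : Tensored V B) {X₁ X₂ : B} (m : X₁ ⟶ X₂) (hm : Mono m) :
    vMono V B m := by
  intro A
  constructor
  intro Z t₁ t₂ htt
  obtain ⟨T, η, hT⟩ := ht Z A
  obtain ⟨g₁, rfl⟩ := (tensor_bij V B hT X₁).2 t₁
  obtain ⟨g₂, rfl⟩ := (tensor_bij V B hT X₁).2 t₂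
  have key : ∀ g : T ⟶ X₁, (η ≫ eHomWhiskerLeft V A g) ≫ eHomWhiskerLeft V A m
      = η ≫ eHomWhiskerLeft V A (g ≫ m) := by
    intro g; rw [eHomWhiskerLeft_comp, Category.assoc]
  rw [key, key] at htt
  have h3 : g₁ ≫ m = g₂ ≫ m := (tensor_bij V B hT X₂).1 htt
  rw [cancel_mono m] at h3
  rw [h3]

/-! ### Orthogonality transfer -/

lemma ordOrth_of_vOrth {A₁ A₂ X₁ X₂ : B} {e : A₁ ⟶ A₂} {m : X₁ ⟶ X₂}
    (h : VOrth V B e m) : OrdOrth B e m := by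
  intro u v hsq
  have hw : eHomEquiv V v ≫ eHomWhiskerRight V e X₂ =
      eHomEquiv V u ≫ eHomWhiskerLeft V A₁ m := by
    rw [← eHomEquiv_comp_right', ← eHomEquiv_comp_left', hsq]
  refine ⟨(eHomEquiv V).symm (h.lift (eHomEquiv V v) (eHomEquiv V u) hw), ⟨?_, ?_⟩, ?_⟩
  · apply (eHomEquiv V).injective
    rw [eHomEquiv_comp_right', Equiv.apply_symm_apply, IsPullback.lift_snd h _ _ hw]
  · apply (eHomEquiv V).injective
    rw [eHomEquiv_comp_left', Equiv.apply_symm_apply, IsPullback.lift_fst h _ _ hw]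
  · intro d ⟨hd1, hd2⟩
    apply (eHomEquiv V).injective
    rw [Equiv.apply_symm_apply]
    apply h.hom_ext
    · rw [IsPullback.lift_fst h _ _ hw, ← eHomEquiv_comp_left', hd2]
    · rw [IsPullback.lift_snd h _ _ hw, ← eHomEquiv_comp_right', hd1]

lemma isPullback_of_existsUnique {C' : Type u₁} [Category.{v₁} C'] {P X Y Z : C'}
    {fst : P ⟶ X} {snd : P ⟶ Y} {f : X ⟶ Z} {g : Y ⟶ Z} (w : fst ≫ f = snd ≫ g)
    (h : ∀ (W : C') (a : W ⟶ X) (b : W ⟶ Y), a ≫ f = b ≫ g →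
      ∃! t : W ⟶ P, t ≫ fst = a ∧ t ≫ snd = b) : IsPullback fst snd f g := by
  refine IsPullback.of_isLimit' ⟨w⟩ ?_
  exact PullbackCone.IsLimit.mk _
    (fun s => (h s.pt s.fst s.snd s.condition).choose)
    (fun s => (h s.pt s.fst s.snd s.condition).choose_spec.1.1)
    (fun s => (h s.pt s.fst s.snd s.condition).choose_spec.1.2)
    (fun s t h1 h2 => (h s.pt s.fst s.snd s.condition).choose_spec.2 t ⟨h1, h2⟩)

lemma vOrth_of_ordOrth (ht : Tensored V B) (hc : Cotensored V B)
    {A₁ A₂ X₁ X₂ : B} (e : A₁ ⟶ A₂) (m : X₁ ⟶ X₂) (he : Epi e)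
    (hm : Mono m ∧ ∀ ⦃W₁ W₂ : B⦄ (e' : W₁ ⟶ W₂), Epi e' → OrdOrth B e' m) :
    VOrth V B e m := by
  apply isPullback_of_existsUnique (eHom_whisker_exchange V e m)
  intro Z a b hcond
  obtain ⟨T₁, η₁, h₁⟩ := ht Z A₁
  obtain ⟨T₂, η₂, h₂⟩ := ht Z A₂
  obtain ⟨et, het⟩ := (tensor_bij V B h₁ T₂).2 (η₂ ≫ eHomWhiskerRight V e T₂)
  replace het : η₁ ≫ eHomWhiskerLeft V A₁ et = η₂ ≫ eHomWhiskerRight V e T₂ := het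
  have nat : ∀ {X : B} (g : T₂ ⟶ X),
      η₁ ≫ eHomWhiskerLeft V A₁ (et ≫ g) = (η₂ ≫ eHomWhiskerLeft V A₂ g) ≫
        eHomWhiskerRight V e X := by
    intro X g
    rw [eHomWhiskerLeft_comp, ← Category.assoc, het, Category.assoc,
      Category.assoc, ← eHom_whisker_exchange]
  have hvepi := vEpi_of_epi V B hc e he
  have hetepi : Epi et := by
    constructor
    intro W p q hpq
    apply (tensor_bij V B h₂ W).1
    have hp := nat (X := W) p
    have hq := nat (X := W) q
    rw [hpq, hq] at hp
    have := hvepi W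
    exact (cancel_mono (eHomWhiskerRight V e W)).1 hp.symm
  obtain ⟨av, hav⟩ := (tensor_bij V B h₂ X₂).2 a
  replace hav : η₂ ≫ eHomWhiskerLeft V A₂ av = a := hav
  obtain ⟨bv, hbv⟩ := (tensor_bij V B h₁ X₁).2 b
  replace hbv : η₁ ≫ eHomWhiskerLeft V A₁ bv = b := hbv
  have hsq : bv ≫ m = et ≫ av := by
    apply (tensor_bij V B h₁ X₂).1
    show η₁ ≫ eHomWhiskerLeft V A₁ (bv ≫ m) = η₁ ≫ eHomWhiskerLeft V A₁ (et ≫ av)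
    rw [nat, eHomWhiskerLeft_comp, ← Category.assoc, hbv, hav, hcond]
  obtain ⟨d, ⟨hd1, hd2⟩, hdu⟩ := hm.2 et hetepi bv av hsq
  refine ⟨η₂ ≫ eHomWhiskerLeft V A₂ d, ⟨?_, ?_⟩, ?_⟩
  · rw [Category.assoc, ← eHomWhiskerLeft_comp, hd2, hav]
  · rw [← nat, hd1, hbv]
  · intro t ⟨ht1, ht2⟩
    obtain ⟨dv, hdv⟩ := (tensor_bij V B h₂ X₁).2 t
    replace hdv : η₂ ≫ eHomWhiskerLeft V A₂ dv = t := hdv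
    have hda : dv ≫ m = av := by
      apply (tensor_bij V B h₂ X₂).1
      show η₂ ≫ eHomWhiskerLeft V A₂ (dv ≫ m) = η₂ ≫ eHomWhiskerLeft V A₂ av
      rw [eHomWhiskerLeft_comp, ← Category.assoc, hdv, ht1, hav]
    have hdb : et ≫ dv = bv := by
      apply (tensor_bij V B h₁ X₁).1
      show η₁ ≫ eHomWhiskerLeft V A₁ (et ≫ dv) = η₁ ≫ eHomWhiskerLeft V A₁ bv
      rw [nat, hdv, ht2, hbv]
    rw [← hdv, hdu dv ⟨hdb, hda⟩]

/-! ### Ordinary strong monomorphisms -/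

lemma ordStrongMono_id (X : B) : ordStrongMono B (𝟙 X) := by
  refine ⟨inferInstance, ?_⟩
  intro A₁ A₂ e he u v hsq
  rw [Category.comp_id] at hsq
  exact ⟨v, ⟨hsq.symm, Category.comp_id v⟩, fun d ⟨_, hd2⟩ => by
    rw [← hd2, Category.comp_id]⟩

lemma ordStrongMono_comp {X Y Z : B} (m₁ : X ⟶ Y) (m₂ : Y ⟶ Z)
    (h₁ : ordStrongMono B m₁) (h₂ : ordStrongMono B m₂) : ordStrongMono B (m₁ ≫ m₂) := by
  haveI := h₁.1; haveI := h₂.1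
  refine ⟨mono_comp m₁ m₂, ?_⟩
  intro A₁ A₂ e he u v hsq
  obtain ⟨d₂, ⟨hd21, hd22⟩, hd2u⟩ := h₂.2 e he (u ≫ m₁) v (by rw [Category.assoc, hsq])
  obtain ⟨d₁, ⟨hd11, hd12⟩, hd1u⟩ := h₁.2 e he u d₂ hd21.symm
  refine ⟨d₁, ⟨hd11, by rw [← Category.assoc, hd12, hd22]⟩, ?_⟩
  intro d ⟨hda, hdb⟩
  have : d ≫ m₁ = d₂ := hd2u (d ≫ m₁) ⟨by rw [← Category.assoc, hda], by
    rw [Category.assoc, hdb]⟩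
  exact hd1u d ⟨hda, this⟩

lemma ordStrongMono_iso_comp {X X' Y : B} (i : X ⟶ X') (m : X' ⟶ Y) [IsIso i]
    (hm : ordStrongMono B m) : ordStrongMono B (i ≫ m) := by
  haveI := hm.1
  refine ⟨mono_comp i m, ?_⟩
  intro A₁ A₂ e he u v hsq
  obtain ⟨d, ⟨hd1, hd2⟩, hdu⟩ := hm.2 e he (u ≫ i) v (by rw [Category.assoc]; exact hsq)
  refine ⟨d ≫ inv i, ⟨?_, ?_⟩, ?_⟩
  · rw [← Category.assoc, hd1]; simp
  · simp only [Category.assoc, IsIso.inv_hom_id_assoc]; exact hd2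
  · intro d' ⟨hda, hdb⟩
    have h3 : d' ≫ i = d := hdu (d' ≫ i) ⟨by rw [← Category.assoc, hda],
      by rw [Category.assoc]; exact hdb⟩
    rw [← h3]; simp

lemma equalizer_ordStrongMono [HasEqualizers B] {P W : B} (u v : P ⟶ W) :
    ordStrongMono B (equalizer.ι u v) := by
  refine ⟨inferInstance, ?_⟩
  intro A₁ A₂ e he p q hsq
  have h1 : q ≫ u = q ≫ v := by
    rw [← cancel_epi e, ← Category.assoc, ← hsq, ← Category.assoc, ← hsq,
      Category.assoc, Category.assoc, equalizer.condition]
  refine ⟨equalizer.lift q h1, ⟨?_, equalizer.lift_ι q h1⟩, ?_⟩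
  · rw [← cancel_mono (equalizer.ι u v), Category.assoc, equalizer.lift_ι, hsq]
  · intro d ⟨_, hd2⟩
    rw [← cancel_mono (equalizer.ι u v), equalizer.lift_ι, hd2]

/-! ### The ordinary factorization -/

lemma ord_factorization (hfwc : OrdFinitelyWellComplete B) :
    FactorizationsExist B (ordEpi B) (ordStrongMono B) := by
  intro X Y f
  haveI : HasFiniteLimits B := hfwc.1
  obtain ⟨P, m, π, hfib⟩ := hfwc.2
    (ι := {i : Σ Z : B, (X ⟶ Z) × (Z ⟶ Y) // ordStrongMono B i.2.2 ∧ i.2.1 ≫ i.2.2 = f})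
    (fun i => i.1.1) (fun i => i.1.2.2) (fun i => i.2.1)
  obtain ⟨e, ⟨hem, heπ⟩, -⟩ := hfib.2 f (fun i => i.1.2.1) (fun i => i.2.2)
  have hmono : Mono m := by
    constructor
    intro W a b hab
    have hπ : ∀ i, a ≫ π i = b ≫ π i := by
      intro i
      haveI := i.2.1.1
      rw [← cancel_mono i.1.2.2, Category.assoc, Category.assoc, hfib.1 i, hab]
    obtain ⟨t, -, htu⟩ := hfib.2 (a ≫ m) (fun i => a ≫ π i)
      (fun i => by rw [Category.assoc, hfib.1 i])
    rw [htu a ⟨rfl, fun i => rfl⟩, htu b ⟨hab.symm, fun i => (hπ i).symm⟩]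
  have hstrong : ordStrongMono B m := by
    refine ⟨hmono, ?_⟩
    intro A₁ A₂ e' he' u v hsq
    have hd : ∀ i, ∃! d : A₂ ⟶ i.1.1, e' ≫ d = u ≫ π i ∧ d ≫ i.1.2.2 = v := by
      intro i
      exact i.2.1.2 e' he' (u ≫ π i) v (by rw [Category.assoc, hfib.1 i, hsq])
    choose d hdP hdU using hd
    obtain ⟨t, ⟨htm, htπ⟩, htu⟩ := hfib.2 v d (fun i => (hdP i).2)
    have het : e' ≫ t = u := by
      obtain ⟨t₀, -, ht₀u⟩ := hfib.2 (u ≫ m) (fun i => u ≫ π i)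
        (fun i => by rw [Category.assoc, hfib.1 i])
      rw [ht₀u (e' ≫ t) ⟨by rw [Category.assoc, htm, hsq],
        fun i => by rw [Category.assoc, htπ i, (hdP i).1]⟩, ht₀u u ⟨rfl, fun i => rfl⟩]
    refine ⟨t, ⟨het, htm⟩, ?_⟩
    intro t' ⟨ht1, ht2⟩
    refine htu t' ⟨ht2, fun i => ?_⟩
    exact hdU i (t' ≫ π i) ⟨by rw [← Category.assoc, ht1],
      by rw [Category.assoc, hfib.1 i, ht2]⟩
  have hepi : Epi e := by
    constructor
    intro W u v huv
    have he' : e ≫ u = e ≫ v := huv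
    have hsm : ordStrongMono B (equalizer.ι u v ≫ m) :=
      ordStrongMono_comp B _ _ (equalizer_ordStrongMono B u v) hstrong
    have hjf : equalizer.lift e he' ≫ equalizer.ι u v ≫ m = f := by
      rw [← Category.assoc, equalizer.lift_ι, hem]
    set j : {i : Σ Z : B, (X ⟶ Z) × (Z ⟶ Y) //
        ordStrongMono B i.2.2 ∧ i.2.1 ≫ i.2.2 = f} :=
      ⟨⟨equalizer u v, equalizer.lift e he', equalizer.ι u v ≫ m⟩, hsm, hjf⟩ with hjdef
    have hj : π j ≫ (equalizer.ι u v ≫ m) = m := hfib.1 j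
    have hid : π j ≫ equalizer.ι u v = 𝟙 P := by
      rw [← cancel_mono m, Category.assoc, hj, Category.id_comp]
    calc u = (π j ≫ equalizer.ι u v) ≫ u := by rw [hid, Category.id_comp]
    _ = (π j ≫ equalizer.ι u v) ≫ v := by
        rw [Category.assoc, Category.assoc, equalizer.condition]
    _ = v := by rw [hid, Category.id_comp]
  exact ⟨P, e, m, hepi, hstrong, hem⟩

lemma ordStrongMono_of_orth (hfwc : OrdFinitelyWellComplete B) {X₁ X₂ : B} (m : X₁ ⟶ X₂)
    (h : ∀ ⦃A₁ A₂ : B⦄ (e : A₁ ⟶ A₂), Epi e → OrdOrth B e m) : ordStrongMono B m := by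
  obtain ⟨Z, e', m', he', hm', hfac⟩ := ord_factorization B hfwc m
  obtain ⟨d, ⟨hd1, hd2⟩, -⟩ := h e' he' (𝟙 X₁) m' (by rw [Category.id_comp, hfac])
  haveI : Epi e' := he'
  haveI : IsIso e' := by
    refine ⟨d, hd1, ?_⟩
    rw [← cancel_epi e', ← Category.assoc, hd1, Category.id_comp, Category.comp_id]
  rw [← hfac]
  exact ordStrongMono_iso_comp B e' m' hm'

lemma epi_of_orth (hfwc : OrdFinitelyWellComplete B) {A₁ A₂ : B} (e : A₁ ⟶ A₂)
    (h : ∀ ⦃X₁ X₂ : B⦄ (m : X₁ ⟶ X₂), ordStrongMono B m → OrdOrth B e m) : Epi e := by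
  obtain ⟨Z, e', m', he', hm', hfac⟩ := ord_factorization B hfwc e
  obtain ⟨d, ⟨hd1, hd2⟩, -⟩ := h m' hm' e' (𝟙 A₂) (by rw [hfac, Category.comp_id])
  haveI : Epi e' := he'
  haveI := hm'.1
  haveI : IsIso m' := by
    refine ⟨d, ?_, hd2⟩
    rw [← cancel_mono m', Category.assoc, hd2, Category.id_comp, Category.comp_id]
  rw [← hfac]
  exact epi_comp e' m'

end Aux

/-- If `B` is a tensored, cotensored and finitely well-complete `V`-category, then
`(Epi_V B, StrMono_V B) = (Epi B, StrMono B)` is a `V`-factorization system. -/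
theorem stmt16 (ht : Tensored V B) (hc : Cotensored V B)
    (hfwc : OrdFinitelyWellComplete B) :
    vEpi V B = ordEpi B ∧ vStrongMono V B = ordStrongMono B ∧
      IsVFactorizationSystem V B (vEpi V B) (vStrongMono V B) := by
  have hE : vEpi V B = ordEpi B := by
    funext A₁ A₂ e
    exact propext ⟨fun h => epi_of_vEpi V B e h, fun h => vEpi_of_epi V B hc e h⟩
  have hM : vStrongMono V B = ordStrongMono B := by
    funext X₁ X₂ m
    refine propext ⟨fun h => ⟨mono_of_vMono V B m h.1, fun A₁ A₂ e he =>
      ordOrth_of_vOrth V B (h.2 e (vEpi_of_epi V B hc e he))⟩,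
      fun h => ⟨vMono_of_mono V B ht m h.1, fun A₁ A₂ e he =>
      vOrth_of_ordOrth V B ht hc e m (epi_of_vEpi V B e he) h⟩⟩
  refine ⟨hE, hM, ⟨?_, ?_⟩, ?_⟩
  · funext X₁ X₂ m
    refine propext ⟨fun h => ?_, fun h A₁ A₂ e he => h.2 e he⟩
    rw [hM]
    exact ordStrongMono_of_orth B hfwc m (fun A₁ A₂ e he =>
      ordOrth_of_vOrth V B (h e (vEpi_of_epi V B hc e he)))
  · funext A₁ A₂ e
    refine propext ⟨fun h => ?_, fun h X₁ X₂ m hm => hm.2 e h⟩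
    have hepi : Epi e := epi_of_orth B hfwc e (fun X₁ X₂ m hm =>
      ordOrth_of_vOrth V B (h m (by rw [hM]; exact hm)))
    exact vEpi_of_epi V B hc e hepi
  · rw [hE, hM]
    exact ord_factorization B hfwc

end EnrichedFS
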